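/- Let X be a tree and g₁, g₂ hyperbolic automorphisms of X whose axes A_{g₁}, A_{g₂} are disjoint or meet in at most one vertex (i.e., share no edge). If the subgroup ⟨g₁, g₂⟩ acts without edge inversions, then ⟨g₁, g₂⟩ is a free group of rank 2. -/

import Mathlib

namespace Stmt12Aux

open SimpleGraph

variable {V : Type*} {G : SimpleGraph V}

/-- Betweenness in the graph metric. -/
def Btwn (G : SimpleGraph V) (x u y : V) : Prop :=
  G.dist x u + G.dist u y = G.dist x y

lemma btw_symm {x u y : V} (h : Btwn G x u y) : Btwn G y u x := by
  unfold Btwn at *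
  have a1 : G.dist y u = G.dist u y := SimpleGraph.dist_comm
  have a2 : G.dist u x = G.dist x u := SimpleGraph.dist_comm
  have a3 : G.dist y x = G.dist x y := SimpleGraph.dist_comm
  omega

lemma btw_left (G : SimpleGraph V) (x y : V) : Btwn G x x y := by
  simp [Btwn]

lemma btw_right (G : SimpleGraph V) (x y : V) : Btwn G x y y := by
  simp [Btwn]

section Tree

variable (hT : G.IsTree)

include hT

lemma tc : G.Connected := hT.isConnected

lemma dist_eq_zero_iff {x y : V} : G.dist x y = 0 ↔ x = y :=
  (tc hT).dist_eq_zero_iff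

lemma dist_pos_of_ne {x y : V} (h : x ≠ y) : 0 < G.dist x y :=
  (tc hT).pos_dist_of_ne h

lemma tri (x y z : V) : G.dist x z ≤ G.dist x y + G.dist y z :=
  (tc hT).dist_triangle

lemma path_eq {x y : V} {p q : G.Walk x y} (hp : p.IsPath) (hq : q.IsPath) : p = q :=
  (hT.existsUnique_path x y).unique hp hq

/-- distance between vertices along a walk is at most index difference. -/
lemma dist_getVert_le (p : G.Walk x y) {i k : ℕ} (hk : i + k ≤ p.length) :
    G.dist (p.getVert i) (p.getVert (i + k)) ≤ k := by
  induction k with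
  | zero => simp
  | succ k ih =>
    have h1 : G.dist (p.getVert i) (p.getVert (i + k)) ≤ k := ih (by omega)
    have hadj : G.Adj (p.getVert (i + k)) (p.getVert (i + k + 1)) :=
      p.adj_getVert_succ (by omega)
    have h2 : G.dist (p.getVert (i + k)) (p.getVert (i + k + 1)) = 1 :=
      (G.dist_eq_one_iff_adj).2 hadj
    calc G.dist (p.getVert i) (p.getVert (i + (k + 1)))
        ≤ G.dist (p.getVert i) (p.getVert (i + k)) +
          G.dist (p.getVert (i + k)) (p.getVert (i + k + 1)) := by
          rw [show i + (k+1) = i + k + 1 by omega]; exact tri hT _ _ _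
      _ ≤ k + 1 := by omega

/-- On a geodesic path, getVert distances are exact. -/
lemma geo_getVert {x y : V} (p : G.Walk x y) (hp : p.length = G.dist x y)
    {i : ℕ} (hi : i ≤ p.length) :
    G.dist x (p.getVert i) = i ∧ G.dist (p.getVert i) y = p.length - i := by
  have h1 : G.dist x (p.getVert i) ≤ i := by
    have := dist_getVert_le hT p (i := 0) (k := i) (by omega)
    simpa using this
  have h2 : G.dist (p.getVert i) y ≤ p.length - i := by
    have := dist_getVert_le hT p (i := i) (k := p.length - i) (by omega)
    rw [show i + (p.length - i) = p.length by omega] at this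
    simpa [p.getVert_length] using this
  have h3 : G.dist x y ≤ G.dist x (p.getVert i) + G.dist (p.getVert i) y := tri hT _ _ _
  omega

lemma btw_of_mem_support {x y u : V} (p : G.Walk x y) (hp : p.length = G.dist x y)
    (hu : u ∈ p.support) : Btwn G x u y := by
  obtain ⟨i, hiu, hi⟩ := Walk.mem_support_iff_exists_getVert.1 hu
  obtain ⟨h1, h2⟩ := geo_getVert hT p hp (i := i) hi
  unfold Btwn
  rw [← hiu] at *
  omega

/-- A between point lies on the geodesic path at its distance index. -/
lemma btw_getVert {x y u : V} (p : G.Walk x y) (hp : p.IsPath) (hl : p.length = G.dist x y)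
    (h : Btwn G x u y) : p.getVert (G.dist x u) = u := by
  obtain ⟨q, hq, hql⟩ := (tc hT).exists_path_of_dist x u
  obtain ⟨r, hr, hrl⟩ := (tc hT).exists_path_of_dist u y
  have hW : (q.append r).length = G.dist x y := by
    rw [Walk.length_append]; rw [hql, hrl]; exact h
  have hWpath : (q.append r).IsPath := (q.append r).isPath_of_length_eq_dist hW
  have hWeq : q.append r = p := path_eq hT hWpath hp
  have husup : u ∈ p.support := by
    rw [← hWeq]
    exact (Walk.mem_support_append_iff q r).2 (Or.inl q.end_mem_support)
  obtain ⟨i, hiu, hi⟩ := Walk.mem_support_iff_exists_getVert.1 husup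
  have := (geo_getVert hT p hl (i := i) hi).1
  rw [hiu] at this
  rw [this, hiu]

/-- uniqueness of between points at a given distance. -/
lemma btw_unique {x y u u' : V} (h : Btwn G x u y) (h' : Btwn G x u' y)
    (hd : G.dist x u = G.dist x u') : u = u' := by
  obtain ⟨p, hp, hl⟩ := (tc hT).exists_path_of_dist x y
  have := btw_getVert hT p hp hl h
  have h2 := btw_getVert hT p hp hl h'
  rw [← this, ← h2, hd]

/-- Positions on a common geodesic determine distances. -/
lemma segpos {x y u u' : V} (h : Btwn G x u y) (h' : Btwn G x u' y)
    (hle : G.dist x u ≤ G.dist x u') :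
    G.dist u u' = G.dist x u' - G.dist x u ∧ Btwn G x u u' ∧ Btwn G u u' y := by
  obtain ⟨p, hp, hl⟩ := (tc hT).exists_path_of_dist x y
  have hun := btw_getVert hT p hp hl h
  have hun' := btw_getVert hT p hp hl h'
  have hiy : G.dist x u ≤ p.length := by
    have := tri hT x u y; unfold Btwn at h; omega
  have hiy' : G.dist x u' ≤ p.length := by
    unfold Btwn at h'; omega
  have hdd : G.dist u u' ≤ G.dist x u' - G.dist x u := by
    have := dist_getVert_le hT p (i := G.dist x u) (k := G.dist x u' - G.dist x u)
      (by omega)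
    rw [show G.dist x u + (G.dist x u' - G.dist x u) = G.dist x u' by omega] at this
    rwa [hun, hun'] at this
  have htri : G.dist x u' ≤ G.dist x u + G.dist u u' := tri hT _ _ _
  have hd : G.dist u u' = G.dist x u' - G.dist x u := by omega
  refine ⟨hd, ?_, ?_⟩
  · unfold Btwn; omega
  · unfold Btwn at *
    have t2 : G.dist u y ≤ G.dist u u' + G.dist u' y := tri hT _ _ _
    have t3 : G.dist u' y ≤ G.dist u' u + G.dist u y := tri hT _ _ _
    have a1 : G.dist u' u = G.dist u u' := SimpleGraph.dist_comm
    omega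

/-- interpolation: existence of a point at distance t on a geodesic. -/
lemma interp {x y : V} {t : ℕ} (ht : t ≤ G.dist x y) :
    ∃ u, G.dist x u = t ∧ G.dist u y = G.dist x y - t ∧ Btwn G x u y := by
  obtain ⟨p, hp, hl⟩ := (tc hT).exists_path_of_dist x y
  refine ⟨p.getVert t, ?_⟩
  obtain ⟨h1, h2⟩ := geo_getVert hT p hl (i := t) (by omega)
  refine ⟨h1, by omega, ?_⟩
  unfold Btwn; omega

/-- In a tree, adjacent vertices have different distances to any vertex. -/
lemma adj_dist_ne {y y' z : V} (h : G.Adj y y') : G.dist y z ≠ G.dist y' z := by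
  intro he
  have hyy' : G.dist y y' = 1 := (G.dist_eq_one_iff_adj).2 h
  by_cases hz : G.dist y z = 0
  · have hyz : y = z := (dist_eq_zero_iff hT).1 hz
    have h0 : G.dist y' z = 0 := by omega
    have hy'z : y' = z := (dist_eq_zero_iff hT).1 h0
    exact h.ne (hyz.trans hy'z.symm)
  · obtain ⟨r, hr, hrl⟩ := (tc hT).exists_path_of_dist y z
    have hy'r : y' ∉ r.support := by
      intro hmem
      have hb := btw_of_mem_support hT r hrl hmem
      unfold Btwn at hb
      omega
    have hW : (Walk.cons h.symm r).IsPath := hr.cons hy'r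
    obtain ⟨r', hr', hrl'⟩ := (tc hT).exists_path_of_dist y' z
    have := path_eq hT hW hr'
    have hlen : (Walk.cons h.symm r).length = r'.length := by rw [this]
    rw [Walk.length_cons, hrl, hrl'] at hlen
    omega


lemma nodip (n : ℕ) : ∀ {x z y y' : V}, G.dist y x = n → G.dist y y' = 1 →
    G.dist y' x + 1 = n → G.dist y' z = G.dist y z + 1 → G.dist x z = n + G.dist y z := by
  induction n using Nat.strong_induction_on with
  | _ n ih =>
    intro x z y y' h1 h2 h3 h4
    rcases Nat.lt_or_ge n 2 with hn | hn
    · -- n = 1, so y' = x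
      have hn1 : n = 1 := by omega
      have : G.dist y' x = 0 := by omega
      have hyx : y' = x := (dist_eq_zero_iff hT).1 this
      subst hyx
      omega
    · -- n ≥ 2
      have hy'x : 1 ≤ G.dist y' x := by omega
      obtain ⟨y'', hy''1, hy''2, _⟩ := interp hT (x := y') (y := x) (t := 1) hy'x
      have hadj1 : G.Adj y' y'' := (G.dist_eq_one_iff_adj).1 hy''1
      have hadj0 : G.Adj y y' := (G.dist_eq_one_iff_adj).1 h2
      have hne := adj_dist_ne hT (z := z) hadj1
      have t1 : G.dist y' z ≤ G.dist y' y'' + G.dist y'' z := tri hT _ _ _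
      have t2 : G.dist y'' z ≤ G.dist y'' y' + G.dist y' z := tri hT _ _ _
      have hc : G.dist y'' y' = G.dist y' y'' := SimpleGraph.dist_comm
      rcases Nat.lt_or_ge (G.dist y'' z) (G.dist y' z) with hcase | hcase
      · -- dip: contradiction
        have hd1 : G.dist y'' z + 1 = G.dist y' z := by omega
        have hyne : y ≠ y'' := by
          intro hcontra
          rw [← hcontra] at hy''2
          omega
        obtain ⟨r, hr, hrl⟩ := (tc hT).exists_path_of_dist y z
        obtain ⟨r', hr', hrl'⟩ := (tc hT).exists_path_of_dist y'' z
        have hP1 : (Walk.cons hadj0.symm r).length = G.dist y' z := by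
          rw [Walk.length_cons, hrl]; omega
        have hP2 : (Walk.cons hadj1 r').length = G.dist y' z := by
          rw [Walk.length_cons, hrl']; omega
        have hP1p := (Walk.cons hadj0.symm r).isPath_of_length_eq_dist hP1
        have hP2p := (Walk.cons hadj1 r').isPath_of_length_eq_dist hP2
        have heq := path_eq hT hP1p hP2p
        have hsup := congrArg Walk.support heq
        rw [Walk.support_cons, Walk.support_cons, r.support_eq_cons,
          r'.support_eq_cons] at hsup
        simp only [List.cons.injEq] at hsup
        exact (hyne hsup.2.1).elim
      · have hd1 : G.dist y'' z = G.dist y' z + 1 := by omega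
        have := ih (n - 1) (by omega) (x := x) (z := z) (y := y') (y' := y'')
          (by omega) hy''1 (by omega) hd1
        omega

lemma median (x y z : V) : ∃ w, Btwn G x w y ∧ Btwn G x w z ∧ Btwn G y w z := by
  obtain ⟨n, hn⟩ : ∃ n, G.dist x y = n := ⟨_, rfl⟩
  induction n using Nat.strong_induction_on generalizing y with
  | _ n ih =>
    rcases Nat.eq_zero_or_pos n with h0 | h0
    · have : x = y := (dist_eq_zero_iff hT).1 (by omega)
      subst this
      exact ⟨x, btw_left G x x, btw_left G x z, btw_left G x z⟩
    · have hyx : 1 ≤ G.dist y x := by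
        have : G.dist y x = G.dist x y := SimpleGraph.dist_comm
        omega
      obtain ⟨y', hy'1, hy'2, _⟩ := interp hT (x := y) (y := x) (t := 1) hyx
      have hcyx : G.dist y x = G.dist x y := SimpleGraph.dist_comm
      have hadj : G.Adj y y' := (G.dist_eq_one_iff_adj).1 hy'1
      have hne := adj_dist_ne hT (z := z) hadj
      have t1 : G.dist y z ≤ G.dist y y' + G.dist y' z := tri hT _ _ _
      have t2 : G.dist y' z ≤ G.dist y' y + G.dist y z := tri hT _ _ _
      have hc : G.dist y' y = G.dist y y' := SimpleGraph.dist_comm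
      rcases Nat.lt_or_ge (G.dist y z) (G.dist y' z) with hcase | hcase
      · -- moving toward x increases distance to z : y is the median
        have hnd := nodip hT n (x := x) (z := z) (y := y) (y' := y')
          (by omega) hy'1 (by omega) (by omega)
        refine ⟨y, btw_right G x y, ?_, btw_left G y z⟩
        unfold Btwn
        omega
      · -- recurse
        have hxy' : G.dist x y' = n - 1 := by
          have : G.dist x y' = G.dist y' x := SimpleGraph.dist_comm
          omega
        obtain ⟨w, w1, w2, w3⟩ := ih (n - 1) (by omega) y' hxy'
        unfold Btwn at w1 w2 w3 ⊢
        have c1 : G.dist w y ≤ G.dist w y' + 1 := by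
          have := tri hT w y' y
          have hcc : G.dist y' y = G.dist y y' := SimpleGraph.dist_comm
          omega
        have c2 : G.dist x y ≤ G.dist x w + G.dist w y := tri hT _ _ _
        have c3 : G.dist y w ≤ 1 + G.dist y' w := by
          have := tri hT y y' w
          omega
        have c4 : G.dist y z ≤ G.dist y w + G.dist w z := tri hT _ _ _
        have c5 : G.dist y w = G.dist w y := SimpleGraph.dist_comm
        have c6 : G.dist y' w = G.dist w y' := SimpleGraph.dist_comm
        refine ⟨w, by omega, by omega, by omega⟩

lemma btw_trans {a b c u : V} (h1 : Btwn G a b c) (h2 : Btwn G b u c) : Btwn G a u c := by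
  unfold Btwn at *
  have t1 : G.dist a c ≤ G.dist a u + G.dist u c := tri hT _ _ _
  have t2 : G.dist a u ≤ G.dist a b + G.dist b u := tri hT _ _ _
  omega

lemma btw_trans' {a b c u : V} (h1 : Btwn G a b c) (h2 : Btwn G a u b) : Btwn G a u c :=
  btw_symm (btw_trans hT (btw_symm h1) (btw_symm h2))

lemma glue {x q p e : V} (hq : q ≠ p) (h1 : Btwn G x q p) (h2 : Btwn G q p e) :
    Btwn G x p e := by
  obtain ⟨k, k1, k2, k3⟩ := median hT p x e
  -- k1 : Btwn p k x, k2 : Btwn p k e, k3 : Btwn x k e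
  have hqk : Btwn G q k e := btw_trans hT h2 k2
  have hkxp : Btwn G x k p := btw_symm k1
  have hdqk : G.dist q k + G.dist k e = G.dist q e := hqk
  have h2' : G.dist q p + G.dist p e = G.dist q e := h2
  have hk2 : G.dist p k + G.dist k e = G.dist p e := k2
  -- so d q k = d q p + d p k
  have hq1 : G.dist x q + G.dist q p = G.dist x p := h1
  have hk1 : G.dist x k + G.dist k p = G.dist x p := hkxp
  have hckp : G.dist k p = G.dist p k := SimpleGraph.dist_comm
  -- positions on [x,p]
  have hpos : G.dist q k = G.dist x k - G.dist x q ∨ G.dist q k = G.dist x q - G.dist x k := by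
    rcases le_total (G.dist x q) (G.dist x k) with hle | hle
    · exact Or.inl (segpos hT h1 hkxp hle).1
    · have := (segpos hT hkxp h1 hle).1
      have hcc : G.dist k q = G.dist q k := SimpleGraph.dist_comm
      omega
  have hqp0 : G.dist q p ≠ 0 := by
    intro hh
    exact hq ((dist_eq_zero_iff hT).1 hh)
  have hpk0 : G.dist p k = 0 := by omega
  have : p = k := (dist_eq_zero_iff hT).1 hpk0
  subst this
  exact k3

end Tree

section Auto

variable (hT : G.IsTree) (g : Equiv.Perm V)
  (hg : ∀ v w, G.Adj (g v) (g w) ↔ G.Adj v w)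

include hT hg

lemma auto_dist_le (x y : V) : G.dist (g x) (g y) ≤ G.dist x y := by
  obtain ⟨p, _, hl⟩ := (tc hT).exists_path_of_dist x y
  let f : G →g G := ⟨(g : V → V), fun h => (hg _ _).2 h⟩
  have := SimpleGraph.dist_le (p.map f)
  rwa [Walk.length_map, hl] at this

lemma auto_dist (x y : V) : G.dist (g x) (g y) = G.dist x y := by
  have h1 := auto_dist_le hT g hg x y
  have hg' : ∀ v w, G.Adj (g⁻¹ v) (g⁻¹ w) ↔ G.Adj v w := by
    intro v w
    conv_rhs => rw [show v = g (g⁻¹ v) by simp, show w = g (g⁻¹ w) by simp]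
    exact (hg _ _).symm
  have h2 := auto_dist_le hT g⁻¹ hg' (g x) (g y)
  simp only [Equiv.Perm.inv_def, Equiv.symm_apply_apply] at h2
  omega

lemma auto_dist_inv (x y : V) : G.dist (g⁻¹ x) (g⁻¹ y) = G.dist x y := by
  conv_rhs => rw [show x = g (g⁻¹ x) by simp, show y = g (g⁻¹ y) by simp]
  exact (auto_dist hT g hg _ _).symm

lemma auto_dist_zpow (n : ℤ) : ∀ x y : V, G.dist ((g ^ n) x) ((g ^ n) y) = G.dist x y := by
  induction n using Int.induction_on with
  | zero => simp
  | succ k ih =>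
    intro x y
    have h1 : g ^ ((k : ℤ) + 1) = g ^ (k : ℤ) * g := zpow_add_one g k
    rw [h1, Equiv.Perm.mul_apply, Equiv.Perm.mul_apply, ih (g x) (g y), auto_dist hT g hg]
  | pred k ih =>
    intro x y
    have h1 : g ^ (-(k : ℤ) - 1) = g ^ (-(k : ℤ)) * g⁻¹ := zpow_sub_one g (-k)
    rw [h1, Equiv.Perm.mul_apply, Equiv.Perm.mul_apply, ih (g⁻¹ x) (g⁻¹ y), auto_dist_inv hT g hg]

lemma auto_btw_zpow (n : ℤ) {x u y : V} (h : Btwn G x u y) :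
    Btwn G ((g ^ n) x) ((g ^ n) u) ((g ^ n) y) := by
  unfold Btwn at *
  rw [auto_dist_zpow hT g hg, auto_dist_zpow hT g hg, auto_dist_zpow hT g hg]
  exact h

lemma auto_btw {x u y : V} (h : Btwn G x u y) : Btwn G (g x) (g u) (g y) := by
  have := auto_btw_zpow hT g hg 1 h
  simpa using this

end Auto

section Axis

lemma axis_btw (hT : G.IsTree) (g : Equiv.Perm V)
    (hg : ∀ v w, G.Adj (g v) (g w) ↔ G.Adj v w)
    (hfix : ∀ v, g v ≠ v)
    (hni : ∀ v w, G.Adj v w → ¬(g v = w ∧ g w = v))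
    {m : ℕ} (hmin : ∀ w, m ≤ G.dist w (g w)) {v₀ : V}
    (hv₀ : G.dist v₀ (g v₀) = m) : Btwn G v₀ (g v₀) (g (g v₀)) := by
  have hm1 : 1 ≤ m := by
    have := dist_pos_of_ne hT (fun h => hfix v₀ h.symm)
    omega
  obtain ⟨w, w1, w2, w3⟩ := median hT v₀ (g (g v₀)) (g v₀)
  have hd12 : G.dist (g v₀) (g (g v₀)) = m := by
    rw [auto_dist hT g hg]; exact hv₀
  -- images
  have M2g : Btwn G (g v₀) (g w) (g (g v₀)) := auto_btw hT g hg w2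
  have M3' : Btwn G (g v₀) w (g (g v₀)) := btw_symm w3
  have hgw : G.dist (g v₀) (g w) = G.dist v₀ w := auto_dist hT g hg _ _
  have hw2 : G.dist v₀ w + G.dist w (g v₀) = m := by
    have := w2; unfold Btwn at this; omega
  have hww : G.dist w (g w) = G.dist v₀ w - G.dist w (g v₀) ∨
      G.dist w (g w) = G.dist w (g v₀) - G.dist v₀ w := by
    have e3 : G.dist (g v₀) w = G.dist w (g v₀) := SimpleGraph.dist_comm
    rcases le_total (G.dist (g v₀) w) (G.dist (g v₀) (g w)) with hle | hle
    · have := (segpos hT M3' M2g hle).1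
      omega
    · have := (segpos hT M2g M3' hle).1
      have e4 : G.dist (g w) w = G.dist w (g w) := SimpleGraph.dist_comm
      omega
  have hminw := hmin w
  -- t = 0 or t = m
  rcases Nat.eq_zero_or_pos (G.dist w (g v₀)) with ht0 | htpos
  · have : w = g v₀ := (dist_eq_zero_iff hT).1 ht0
    subst this
    exact w1
  · have htm : G.dist w (g v₀) = m := by omega
    have hv0w : G.dist v₀ w = 0 := by omega
    have hwv : w = v₀ := ((dist_eq_zero_iff hT).1 hv0w).symm
    subst hwv
    -- then g (g w) = w
    have h20 : G.dist (g (g w)) w = 0 := by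
      have := w3; unfold Btwn at this
      have e : G.dist (g (g w)) (g w) = m := by
        rw [SimpleGraph.dist_comm]; exact hd12
      omega
    have hgg : g (g w) = w := (dist_eq_zero_iff hT).1 h20
    rcases Nat.lt_or_ge m 2 with hm2 | hm2
    · -- m = 1 : inversion
      have hm' : m = 1 := by omega
      have hadj : G.Adj w (g w) := (G.dist_eq_one_iff_adj).1 (by omega)
      exact absurd ⟨rfl, hgg⟩ (hni w (g w) hadj)
    · -- m ≥ 2 : point at distance 1
      obtain ⟨p, hp1, hp2, hp3⟩ := interp hT (x := w) (y := g w) (t := 1) (by omega)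
      have hgp : Btwn G (g w) (g p) (g (g w)) := auto_btw hT g hg hp3
      rw [hgg] at hgp
      have hgp' : Btwn G w (g p) (g w) := btw_symm hgp
      have hgpd : G.dist (g w) (g p) = 1 := by rw [auto_dist hT g hg]; exact hp1
      have hwgp : G.dist w (g p) = m - 1 := by
        have := hgp'; unfold Btwn at this
        have e : G.dist (g p) (g w) = G.dist (g w) (g p) := SimpleGraph.dist_comm
        omega
      have hle : G.dist w p ≤ G.dist w (g p) := by omega
      have := (segpos hT hp3 hgp' hle).1
      have hminp := hmin p
      omega

lemma axis_orbit (hT : G.IsTree) (g : Equiv.Perm V)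
    (hg : ∀ v w, G.Adj (g v) (g w) ↔ G.Adj v w)
    (hfix : ∀ v, g v ≠ v)
    (hni : ∀ v w, G.Adj v w → ¬(g v = w ∧ g w = v))
    {m : ℕ} (hmin : ∀ w, m ≤ G.dist w (g w)) {v₀ : V}
    (hv₀ : G.dist v₀ (g v₀) = m) :
    ∀ n : ℕ, G.dist v₀ ((g ^ n) v₀) = n * m := by
  have hpow : ∀ (k : ℕ) (x y : V), G.dist ((g ^ k) x) ((g ^ k) y) = G.dist x y := by
    intro k x y
    have := auto_dist_zpow hT g hg (k : ℤ) x y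
    rwa [zpow_natCast] at this
  have hbase : Btwn G v₀ (g v₀) (g (g v₀)) := axis_btw hT g hg hfix hni hmin hv₀
  have hd12 : G.dist (g v₀) (g (g v₀)) = m := by rw [auto_dist hT g hg]; exact hv₀
  have h2 : G.dist v₀ (g (g v₀)) = 2 * m := by
    have hb := hbase; unfold Btwn at hb; omega
  intro n
  induction n using Nat.strong_induction_on with
  | _ n ih =>
    match n, ih with
    | 0, _ => simp
    | 1, _ => simpa using hv₀
    | (k+2), ih =>
      have IH0 : G.dist v₀ ((g ^ k) v₀) = k * m := ih k (by omega)
      have IH1 : G.dist v₀ ((g ^ (k+1)) v₀) = (k+1) * m := ih (k+1) (by omega)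
      have hA1 : (g ^ (k+1)) v₀ = (g ^ k) (g v₀) := by
        rw [pow_succ, Equiv.Perm.mul_apply]
      have hA2 : (g ^ (k+2)) v₀ = (g ^ k) (g (g v₀)) := by
        rw [show k + 2 = k + 1 + 1 by omega, pow_succ, pow_succ, Equiv.Perm.mul_apply,
          Equiv.Perm.mul_apply]
      have eK : G.dist ((g ^ k) v₀) ((g ^ (k+1)) v₀) = m := by
        rw [hA1, hpow k]; exact hv₀
      have eK2 : G.dist ((g ^ (k+1)) v₀) ((g ^ (k+2)) v₀) = m := by
        rw [hA1, hA2, hpow k]; exact hd12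
      have e02 : G.dist ((g ^ k) v₀) ((g ^ (k+2)) v₀) = 2 * m := by
        rw [hA2, hpow k]; exact h2
      have hmul1 : (k+1) * m = k * m + m := by ring
      have hmul2 : (k+2) * m = (k+1) * m + m := by ring
      have btwK : Btwn G ((g ^ k) v₀) ((g ^ (k+1)) v₀) ((g ^ (k+2)) v₀) := by
        unfold Btwn; rw [eK, eK2, e02]; omega
      obtain ⟨w, w1, w2, w3⟩ := median hT v₀ ((g ^ (k+2)) v₀) ((g ^ (k+1)) v₀)
      have w2' := w2; have w3' := w3
      unfold Btwn at w2' w3'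
      rw [IH1] at w2'
      have ecomm : G.dist ((g ^ (k+2)) v₀) ((g ^ (k+1)) v₀) = m := by
        rw [SimpleGraph.dist_comm]; exact eK2
      rw [ecomm] at w3'
      -- position of w on [v₀, A(k+1)] is (k+1)m - s where s = d w A(k+1)
      have hle : G.dist v₀ ((g ^ k) v₀) ≤ G.dist v₀ w := by
        rw [IH0]; omega
      have hseg := (segpos hT (by unfold Btwn; rw [IH0, eK, IH1]; omega : Btwn G v₀ ((g ^ k) v₀) ((g ^ (k+1)) v₀)) w2 hle).1
      have hbt : Btwn G ((g ^ k) v₀) w ((g ^ (k+2)) v₀) :=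
        btw_trans hT btwK (btw_symm w3)
      have hbt' := hbt; unfold Btwn at hbt'
      rw [e02] at hbt'
      have hcomm2 : G.dist w ((g ^ (k+2)) v₀) = G.dist ((g ^ (k+2)) v₀) w :=
        SimpleGraph.dist_comm
      -- conclude s = 0
      have hs0 : G.dist w ((g ^ (k+1)) v₀) = 0 := by omega
      have hw : w = (g ^ (k+1)) v₀ := by
        have := (dist_eq_zero_iff hT).1 hs0
        exact this
      subst hw
      have w1' := w1; unfold Btwn at w1'
      rw [IH1, eK2] at w1'
      omega

lemma axis_orbit_z (hT : G.IsTree) (g : Equiv.Perm V)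
    (hg : ∀ v w, G.Adj (g v) (g w) ↔ G.Adj v w)
    (hfix : ∀ v, g v ≠ v)
    (hni : ∀ v w, G.Adj v w → ¬(g v = w ∧ g w = v))
    {m : ℕ} (hmin : ∀ w, m ≤ G.dist w (g w)) {v₀ : V}
    (hv₀ : G.dist v₀ (g v₀) = m) :
    ∀ a b : ℤ, (G.dist ((g ^ a) v₀) ((g ^ b) v₀) : ℤ) = |b - a| * m := by
  have step : ∀ n : ℤ, (G.dist v₀ ((g ^ n) v₀) : ℤ) = |n| * m := by
    intro n
    rcases le_or_gt 0 n with hn | hn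
    · lift n to ℕ using hn
      rw [zpow_natCast]
      rw [axis_orbit hT g hg hfix hni hmin hv₀ n]
      push_cast
      rw [abs_of_nonneg (by positivity : (0:ℤ) ≤ (n:ℤ))]
    · have key : (g ^ (-n)) ((g ^ n) v₀) = v₀ := by
        rw [← Equiv.Perm.mul_apply, ← zpow_add]
        simp
      have := auto_dist_zpow hT g hg (-n) v₀ ((g ^ n) v₀)
      rw [key] at this
      rw [← this]
      have hcomm : G.dist ((g ^ (-n)) v₀) v₀ = G.dist v₀ ((g ^ (-n)) v₀) :=
        SimpleGraph.dist_comm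
      rw [hcomm]
      have hn' : (0:ℤ) ≤ -n := by omega
      lift (-n) to ℕ using hn' with k hk
      rw [zpow_natCast, axis_orbit hT g hg hfix hni hmin hv₀ k]
      push_cast
      rw [abs_of_neg hn]
      have : (k : ℤ) = -n := hk
      rw [this]
  intro a b
  have key1 : (g ^ (-a)) ((g ^ a) v₀) = v₀ := by
    rw [← Equiv.Perm.mul_apply, ← zpow_add]; simp
  have key2 : (g ^ (-a)) ((g ^ b) v₀) = (g ^ (b - a)) v₀ := by
    rw [← Equiv.Perm.mul_apply, ← zpow_add]
    ring_nf
  have := auto_dist_zpow hT g hg (-a) ((g ^ a) v₀) ((g ^ b) v₀)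
  rw [key1, key2] at this
  rw [← this, step (b - a)]

lemma axis_exists (hT : G.IsTree) (g : Equiv.Perm V)
    (hg : ∀ v w, G.Adj (g v) (g w) ↔ G.Adj v w)
    (hfix : ∀ v, g v ≠ v)
    (hni : ∀ v w, G.Adj v w → ¬(g v = w ∧ g w = v))
    (m : ℕ) (hm : m = sInf (Set.range fun v => G.dist v (g v))) :
    ∃ (L : Set V) (c : V → ℤ),
      L.Nonempty ∧
      (∀ x ∈ L, G.dist x (g x) = m) ∧
      (∀ x ∈ L, g x ∈ L) ∧
      (∀ x ∈ L, g⁻¹ x ∈ L) ∧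
      (∀ x ∈ L, c (g x) = c x + m) ∧
      (∀ x y, x ∈ L → y ∈ L → (G.dist x y : ℤ) = |c x - c y|) ∧
      (∀ x u' y, x ∈ L → y ∈ L → Btwn G x u' y → u' ∈ L) ∧
      1 ≤ m := by
  classical
  have hV : Nonempty V := (tc hT).nonempty
  have hS : (Set.range fun v => G.dist v (g v)).Nonempty := Set.range_nonempty _
  have hmem : m ∈ Set.range fun v => G.dist v (g v) := hm ▸ Nat.sInf_mem hS
  obtain ⟨v₀, hv₀⟩ := hmem
  simp only at hv₀
  have hmin : ∀ w, m ≤ G.dist w (g w) := fun w => hm ▸ Nat.sInf_le ⟨w, rfl⟩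
  have hm1 : 1 ≤ m := by
    have := dist_pos_of_ne hT (fun h => hfix v₀ h.symm)
    omega
  have dU := axis_orbit_z hT g hg hfix hni hmin hv₀
  have dUedge : ∀ k : ℤ, G.dist ((g ^ k) v₀) ((g ^ (k+1)) v₀) = m := by
    intro k
    have h := dU k (k+1)
    have he : |(k + 1 : ℤ) - k| = 1 := by
      rw [show (k+1:ℤ) - k = 1 by ring, abs_one]
    rw [he, one_mul] at h
    exact_mod_cast h
  have shiftg : ∀ j : ℤ, g ((g ^ j) v₀) = (g ^ (j+1)) v₀ := by
    intro j
    have : (g : Equiv.Perm V) ^ (j+1) = g * g ^ j := by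
      rw [add_comm]; exact zpow_one_add g j
    rw [this, Equiv.Perm.mul_apply]
  have shiftginv : ∀ j : ℤ, g⁻¹ ((g ^ j) v₀) = (g ^ (j-1)) v₀ := by
    intro j
    have : (g : Equiv.Perm V) ^ (j-1) = g⁻¹ * g ^ j := by
      rw [show j - 1 = -1 + j by ring, zpow_add, zpow_neg_one]
    rw [this, Equiv.Perm.mul_apply]
  -- the axis
  set L : Set V := {x | ∃ k : ℤ, Btwn G ((g ^ k) v₀) x ((g ^ (k+1)) v₀)} with hLdef
  have hwit : ∀ x, x ∈ L → ∃ k : ℤ, Btwn G ((g ^ k) v₀) x ((g ^ (k+1)) v₀) := fun x hx => hx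
  have hwit' : ∀ x (k : ℤ), Btwn G ((g ^ k) v₀) x ((g ^ (k+1)) v₀) → x ∈ L := fun x k hk => ⟨k, hk⟩
  -- master distance formula
  have master_le : ∀ (k l : ℤ), k ≤ l → ∀ x y, Btwn G ((g ^ k) v₀) x ((g ^ (k+1)) v₀) →
      Btwn G ((g ^ l) v₀) y ((g ^ (l+1)) v₀) →
      (G.dist x y : ℤ) =
        |(k * m + (G.dist ((g ^ k) v₀) x : ℤ)) - (l * m + (G.dist ((g ^ l) v₀) y : ℤ))| := by
    intro k l hkl x y hx hy
    rcases eq_or_lt_of_le hkl with rfl | hlt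
    · rcases le_total (G.dist ((g ^ k) v₀) x) (G.dist ((g ^ k) v₀) y) with hle | hle
      · have hxy := (segpos hT hx hy hle).1
        have hlez : (G.dist ((g ^ k) v₀) x : ℤ) ≤ (G.dist ((g ^ k) v₀) y : ℤ) := by
          exact_mod_cast hle
        rw [hxy, Nat.cast_sub hle, abs_of_nonpos (by linarith)]
        ring
      · have hxy := (segpos hT hy hx hle).1
        have hc : G.dist y x = G.dist x y := SimpleGraph.dist_comm
        rw [hc] at hxy
        have hlez : (G.dist ((g ^ k) v₀) y : ℤ) ≤ (G.dist ((g ^ k) v₀) x : ℤ) := by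
          exact_mod_cast hle
        rw [hxy, Nat.cast_sub hle, abs_of_nonneg (by linarith)]
        ring
    · have hx' := hx; have hy' := hy
      unfold Btwn at hx' hy'
      rw [dUedge k] at hx'
      rw [dUedge l] at hy'
      have E1 : (G.dist ((g ^ (k+1)) v₀) ((g ^ l) v₀) : ℤ) = (l - k - 1) * m := by
        rw [dU (k+1) l, abs_of_nonneg (by omega : (0:ℤ) ≤ l - (k+1))]
        ring
      have E2 : (G.dist ((g ^ k) v₀) ((g ^ (l+1)) v₀) : ℤ) = (l + 1 - k) * m := by
        rw [dU k (l+1), abs_of_nonneg (by omega : (0:ℤ) ≤ l + 1 - k)]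
      have U1 : G.dist x y ≤ G.dist x ((g ^ (k+1)) v₀) +
          G.dist ((g ^ (k+1)) v₀) ((g ^ l) v₀) + G.dist ((g ^ l) v₀) y := by
        have t1 := tri hT x ((g ^ (k+1)) v₀) y
        have t2 := tri hT ((g ^ (k+1)) v₀) ((g ^ l) v₀) y
        omega
      have LB : G.dist ((g ^ k) v₀) ((g ^ (l+1)) v₀) ≤
          G.dist ((g ^ k) v₀) x + G.dist x y + G.dist y ((g ^ (l+1)) v₀) := by
        have t1 := tri hT ((g ^ k) v₀) x ((g ^ (l+1)) v₀)
        have t2 := tri hT x y ((g ^ (l+1)) v₀)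
        omega
      have f1 : (G.dist ((g ^ k) v₀) x : ℤ) + (G.dist x ((g ^ (k+1)) v₀) : ℤ) = m := by
        exact_mod_cast hx'
      have f2 : (G.dist ((g ^ l) v₀) y : ℤ) + (G.dist y ((g ^ (l+1)) v₀) : ℤ) = m := by
        exact_mod_cast hy'
      have U1z : (G.dist x y : ℤ) ≤ (G.dist x ((g ^ (k+1)) v₀) : ℤ) +
          (l - k - 1) * m + (G.dist ((g ^ l) v₀) y : ℤ) := by
        have hz : (G.dist x y : ℤ) ≤ (G.dist x ((g ^ (k+1)) v₀) : ℤ) +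
            (G.dist ((g ^ (k+1)) v₀) ((g ^ l) v₀) : ℤ) + (G.dist ((g ^ l) v₀) y : ℤ) := by
          exact_mod_cast U1
        rw [E1] at hz
        exact hz
      have LBz : (l + 1 - k) * m ≤ (G.dist ((g ^ k) v₀) x : ℤ) + (G.dist x y : ℤ) +
          (G.dist y ((g ^ (l+1)) v₀) : ℤ) := by
        have hz : (G.dist ((g ^ k) v₀) ((g ^ (l+1)) v₀) : ℤ) ≤
            (G.dist ((g ^ k) v₀) x : ℤ) + (G.dist x y : ℤ) +
            (G.dist y ((g ^ (l+1)) v₀) : ℤ) := by exact_mod_cast LB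
        rw [E2] at hz
        exact hz
      have hP : (0:ℤ) ≤ (l - k - 1) * m :=
        mul_nonneg (by omega) (by exact_mod_cast Nat.zero_le m)
      have hX0 : (0:ℤ) ≤ (G.dist ((g ^ k) v₀) x : ℤ) := Int.natCast_nonneg _
      have hY0 : (0:ℤ) ≤ (G.dist ((g ^ l) v₀) y : ℤ) := Int.natCast_nonneg _
      have hX0' : (0:ℤ) ≤ (G.dist x ((g ^ (k+1)) v₀) : ℤ) := Int.natCast_nonneg _
      have hY0' : (0:ℤ) ≤ (G.dist y ((g ^ (l+1)) v₀) : ℤ) := Int.natCast_nonneg _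
      have hrel2 : (l:ℤ) * m = k * m + (l - k - 1) * m + m := by ring
      have hrel3 : (l + 1 - k) * m = (l - k - 1) * m + 2 * m := by ring
      rw [abs_of_nonpos (by linarith)]
      linarith
  have master : ∀ (k l : ℤ) x y, Btwn G ((g ^ k) v₀) x ((g ^ (k+1)) v₀) →
      Btwn G ((g ^ l) v₀) y ((g ^ (l+1)) v₀) →
      (G.dist x y : ℤ) =
        |(k * m + (G.dist ((g ^ k) v₀) x : ℤ)) - (l * m + (G.dist ((g ^ l) v₀) y : ℤ))| := by
    intro k l x y hx hy
    rcases le_total k l with hkl | hkl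
    · exact master_le k l hkl x y hx hy
    · have := master_le l k hkl y x hy hx
      have hc : G.dist x y = G.dist y x := SimpleGraph.dist_comm
      rw [hc, this, abs_sub_comm]
  -- the coordinate function
  set c : V → ℤ := fun x =>
    if hx : ∃ k : ℤ, Btwn G ((g ^ k) v₀) x ((g ^ (k+1)) v₀) then
      hx.choose * m + G.dist ((g ^ hx.choose) v₀) x
    else 0 with hcdef
  have cspec : ∀ x (k : ℤ), Btwn G ((g ^ k) v₀) x ((g ^ (k+1)) v₀) →
      c x = k * m + G.dist ((g ^ k) v₀) x := by
    intro x k hk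
    have hx : ∃ k : ℤ, Btwn G ((g ^ k) v₀) x ((g ^ (k+1)) v₀) := ⟨k, hk⟩
    have h0 : c x = hx.choose * m + G.dist ((g ^ hx.choose) v₀) x := by
      simp only [hcdef]
      rw [dif_pos hx]
    have := master hx.choose k x x hx.choose_spec hk
    rw [SimpleGraph.dist_self] at this
    have h1 : (0:ℤ) = |(hx.choose * m + (G.dist ((g ^ hx.choose) v₀) x : ℤ)) -
        (k * m + (G.dist ((g ^ k) v₀) x : ℤ))| := by exact_mod_cast this
    have h2 := abs_eq_zero.1 h1.symm
    have h3 := sub_eq_zero.1 h2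
    rw [h0, h3]
  -- membership of orbit points
  have hv₀L : v₀ ∈ L := by
    refine ⟨0, ?_⟩
    have h0 : ((g : Equiv.Perm V) ^ (0:ℤ)) v₀ = v₀ := by simp
    rw [h0]
    exact btw_left G v₀ _
  -- invariance
  have hgL : ∀ x ∈ L, g x ∈ L := by
    intro x hx
    obtain ⟨k, hk⟩ := hwit x hx
    refine ⟨k+1, ?_⟩
    have := auto_btw hT g hg hk
    rwa [shiftg k, shiftg (k+1)] at this
  have hginvL : ∀ x ∈ L, g⁻¹ x ∈ L := by
    intro x hx
    obtain ⟨k, hk⟩ := hwit x hx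
    refine ⟨k-1, ?_⟩
    have hg' : ∀ v w, G.Adj (g⁻¹ v) (g⁻¹ w) ↔ G.Adj v w := by
      intro v w
      conv_rhs => rw [show v = g (g⁻¹ v) by simp, show w = g (g⁻¹ w) by simp]
      exact (hg _ _).symm
    have := auto_btw hT g⁻¹ hg' hk
    rw [shiftginv k, shiftginv (k+1)] at this
    rwa [show k + 1 - 1 = k - 1 + 1 by ring] at this
  -- displacement on the axis
  have hdisp : ∀ x ∈ L, G.dist x (g x) = m := by
    intro x hx
    obtain ⟨k, hk⟩ := hwit x hx
    have hk' := hk; unfold Btwn at hk'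
    rw [dUedge k] at hk'
    have hgx : G.dist ((g ^ (k+1)) v₀) (g x) = G.dist ((g ^ k) v₀) x := by
      rw [← shiftg k]
      exact auto_dist hT g hg _ _
    have t1 := tri hT x ((g ^ (k+1)) v₀) (g x)
    have hcomm : G.dist ((g ^ (k+1)) v₀) (g x) = G.dist (g x) ((g ^ (k+1)) v₀) :=
      SimpleGraph.dist_comm
    have := hmin x
    omega
  -- coordinate shift
  have hcshift : ∀ x ∈ L, c (g x) = c x + m := by
    intro x hx
    obtain ⟨k, hk⟩ := hwit x hx
    have hgk : Btwn G ((g ^ (k+1)) v₀) (g x) ((g ^ (k+1+1)) v₀) := by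
      have := auto_btw hT g hg hk
      rwa [shiftg k, shiftg (k+1)] at this
    have e1 := cspec x k hk
    have e2 := cspec (g x) (k+1) hgk
    have hgx : G.dist ((g ^ (k+1)) v₀) (g x) = G.dist ((g ^ k) v₀) x := by
      rw [← shiftg k]
      exact auto_dist hT g hg _ _
    rw [e1, e2, hgx]
    ring
  -- distance formula on L
  have hdistL : ∀ x y, x ∈ L → y ∈ L → (G.dist x y : ℤ) = |c x - c y| := by
    intro x y hx hy
    obtain ⟨k, hk⟩ := hwit x hx
    obtain ⟨l, hl⟩ := hwit y hy
    rw [master k l x y hk hl, cspec x k hk, cspec y l hl]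
  -- every coordinate is attained
  have hsurj : ∀ n : ℤ, ∃ p ∈ L, c p = n := by
    intro n
    have hmz : (0:ℤ) < m := by exact_mod_cast hm1
    set q := n / (m:ℤ) with hq
    set t := n % (m:ℤ) with ht
    have ht0 : 0 ≤ t := Int.emod_nonneg n (by omega)
    have htm : t < m := Int.emod_lt_of_pos n hmz
    have hnqt : (m:ℤ) * q + t = n := by rw [hq, ht]; linarith [Int.mul_ediv_add_emod n m]
    have htN : t.toNat ≤ G.dist ((g ^ q) v₀) ((g ^ (q+1)) v₀) := by
      rw [dUedge q]; omega
    obtain ⟨p, hp1, hp2, hp3⟩ := interp hT htN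
    refine ⟨p, hwit' p q hp3, ?_⟩
    rw [cspec p q hp3, hp1]
    have : ((t.toNat : ℕ) : ℤ) = t := Int.toNat_of_nonneg ht0
    rw [this]
    linarith
  -- convexity
  have hconv : ∀ x u' y, x ∈ L → y ∈ L → Btwn G x u' y → u' ∈ L := by
    intro x u' y hx hy hb
    have hbd := hb
    unfold Btwn at hbd
    have hbdz : (G.dist x u' : ℤ) + (G.dist u' y : ℤ) = (G.dist x y : ℤ) := by
      exact_mod_cast hbd
    have hdxy := hdistL x y hx hy
    have hr0 : (0:ℤ) ≤ (G.dist x u' : ℤ) := Int.natCast_nonneg _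
    have hrle : (G.dist x u' : ℤ) ≤ (G.dist x y : ℤ) := by
      exact_mod_cast (by omega : G.dist x u' ≤ G.dist x y)
    rcases le_total (c x) (c y) with hcc | hcc
    · rw [abs_of_nonpos (by linarith : c x - c y ≤ 0)] at hdxy
      obtain ⟨p, hpL, hpc⟩ := hsurj (c x + G.dist x u')
      have e1 : (G.dist x p : ℤ) = (G.dist x u' : ℤ) := by
        rw [hdistL x p hx hpL, hpc, abs_of_nonpos (by linarith)]
        ring
      have e2 : (G.dist p y : ℤ) = (G.dist u' y : ℤ) := by
        rw [hdistL p y hpL hy, hpc, abs_of_nonpos (by linarith)]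
        linarith
      have hbp : Btwn G x p y := by
        have hz : (G.dist x p : ℤ) + (G.dist p y : ℤ) = (G.dist x y : ℤ) := by
          rw [e1, e2]; exact hbdz
        exact_mod_cast hz
      have : u' = p := btw_unique hT hb hbp (by exact_mod_cast e1.symm)
      rw [this]; exact hpL
    · rw [abs_of_nonneg (by linarith : (0:ℤ) ≤ c x - c y)] at hdxy
      obtain ⟨p, hpL, hpc⟩ := hsurj (c x - G.dist x u')
      have e1 : (G.dist x p : ℤ) = (G.dist x u' : ℤ) := by
        rw [hdistL x p hx hpL, hpc, abs_of_nonneg (by linarith)]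
        ring
      have e2 : (G.dist p y : ℤ) = (G.dist u' y : ℤ) := by
        rw [hdistL p y hpL hy, hpc, abs_of_nonneg (by linarith)]
        linarith
      have hbp : Btwn G x p y := by
        have hz : (G.dist x p : ℤ) + (G.dist p y : ℤ) = (G.dist x y : ℤ) := by
          rw [e1, e2]; exact hbdz
        exact_mod_cast hz
      have : u' = p := btw_unique hT hb hbp (by exact_mod_cast e1.symm)
      rw [this]; exact hpL
  exact ⟨L, c, ⟨v₀, hv₀L⟩, hdisp, hgL, hginvL, hcshift, hdistL, hconv, hm1⟩

lemma gate_exists (hT : G.IsTree) {L : Set V} (hne : L.Nonempty)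
    (hconv : ∀ x u y, x ∈ L → y ∈ L → Btwn G x u y → u ∈ L) (x : V) :
    ∃ q, q ∈ L ∧ ∀ r ∈ L, Btwn G x q r := by
  obtain ⟨a₀, ha₀⟩ := hne
  have hTne : {n | ∃ q ∈ L, G.dist x q = n}.Nonempty := ⟨_, a₀, ha₀, rfl⟩
  obtain ⟨q₀, hq₀L, hq₀⟩ := Nat.sInf_mem hTne
  have hminT : ∀ r ∈ L, sInf {n | ∃ q ∈ L, G.dist x q = n} ≤ G.dist x r :=
    fun r hr => Nat.sInf_le ⟨r, hr, rfl⟩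
  refine ⟨q₀, hq₀L, ?_⟩
  intro r hr
  obtain ⟨w, w1, w2, w3⟩ := median hT q₀ r x
  have hwL := hconv q₀ w r hq₀L hr w1
  have hw2 := w2
  unfold Btwn at hw2
  have hminw := hminT w hwL
  have hc1 : G.dist q₀ x = G.dist x q₀ := SimpleGraph.dist_comm
  have hc2 : G.dist w x = G.dist x w := SimpleGraph.dist_comm
  have hq0w : G.dist q₀ w = 0 := by omega
  have : q₀ = w := (dist_eq_zero_iff hT).1 hq0w
  subst this
  exact btw_symm w3

lemma gate_unique (hT : G.IsTree) {L : Set V} {x q q' : V}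
    (hq : q ∈ L) (hq' : q' ∈ L)
    (hB : ∀ r ∈ L, Btwn G x q r) (hB' : ∀ r ∈ L, Btwn G x q' r) : q = q' := by
  have h1 := hB q' hq'
  have h2 := hB' q hq
  unfold Btwn at h1 h2
  have hc : G.dist q' q = G.dist q q' := SimpleGraph.dist_comm
  have h0 : G.dist q q' = 0 := by omega
  exact (dist_eq_zero_iff hT).1 h0

end Axis

end Stmt12Aux

open Stmt12Aux

/-- If `g₁, g₂` are hyperbolic automorphisms of a tree whose axes
(the sets of vertices of minimal displacement) share no edge, and the subgroup
`⟨g₁, g₂⟩` acts without edge inversions, then `⟨g₁, g₂⟩` is free of rank 2,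
i.e. the natural map from the free group on two generators is injective. -/
theorem stmt_12 {V : Type*} (G : SimpleGraph V) (hT : G.IsTree)
    (g₁ g₂ : Equiv.Perm V)
    (hg₁ : ∀ v w, G.Adj (g₁ v) (g₁ w) ↔ G.Adj v w)
    (hg₂ : ∀ v w, G.Adj (g₂ v) (g₂ w) ↔ G.Adj v w)
    (hhyp₁ : ∀ v, g₁ v ≠ v) (hhyp₂ : ∀ v, g₂ v ≠ v)
    (hnoinv : ∀ h : Equiv.Perm V, h ∈ Subgroup.closure {g₁, g₂} →
      ∀ v w, G.Adj v w → ¬(h v = w ∧ h w = v))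
    (m₁ m₂ : ℕ)
    (hm₁ : m₁ = sInf (Set.range fun v => G.dist v (g₁ v)))
    (hm₂ : m₂ = sInf (Set.range fun v => G.dist v (g₂ v)))
    (hdisj : ¬ ∃ v w, G.Adj v w ∧
      G.dist v (g₁ v) = m₁ ∧ G.dist w (g₁ w) = m₁ ∧
      G.dist v (g₂ v) = m₂ ∧ G.dist w (g₂ w) = m₂) :
    Function.Injective
      (FreeGroup.lift (fun b : Bool => if b then g₁ else g₂) :
        FreeGroup Bool →* Equiv.Perm V) := by
  classical
  have hni₁ : ∀ v w, G.Adj v w → ¬(g₁ v = w ∧ g₁ w = v) :=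
    fun v w h => hnoinv g₁ (Subgroup.subset_closure (by simp)) v w h
  have hni₂ : ∀ v w, G.Adj v w → ¬(g₂ v = w ∧ g₂ w = v) :=
    fun v w h => hnoinv g₂ (Subgroup.subset_closure (by simp)) v w h
  obtain ⟨L₁, c₁, hL₁ne, hdisp₁, hgL₁, hginvL₁, hcsh₁, hd₁, hconv₁, hm₁1⟩ :=
    axis_exists hT g₁ hg₁ hhyp₁ hni₁ m₁ hm₁
  obtain ⟨L₂, c₂, hL₂ne, hdisp₂, hgL₂, hginvL₂, hcsh₂, hd₂, hconv₂, hm₂1⟩ :=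
    axis_exists hT g₂ hg₂ hhyp₂ hni₂ m₂ hm₂
  -- gates (projections)
  choose π₁ hπ₁L hπ₁B using fun x => gate_exists hT hL₁ne hconv₁ x
  choose π₂ hπ₂L hπ₂B using fun x => gate_exists hT hL₂ne hconv₂ x
  -- closest pair
  obtain ⟨a₀, ha₀⟩ := hL₁ne
  obtain ⟨b₀, hb₀⟩ := hL₂ne
  have hSne : {n | ∃ a ∈ L₁, ∃ b ∈ L₂, G.dist a b = n}.Nonempty := ⟨_, a₀, ha₀, b₀, hb₀, rfl⟩
  obtain ⟨p₁, hp₁, p₂, hp₂, hδ⟩ := Nat.sInf_mem hSne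
  have hminS : ∀ a ∈ L₁, ∀ b ∈ L₂,
      sInf {n | ∃ a ∈ L₁, ∃ b ∈ L₂, G.dist a b = n} ≤ G.dist a b :=
    fun a ha b hb => Nat.sInf_le ⟨a, ha, b, hb, rfl⟩
  -- bridge properties
  have hbr₁ : ∀ a ∈ L₁, Btwn G a p₁ p₂ := by
    intro a ha
    obtain ⟨w, w1, w2, w3⟩ := median hT p₁ a p₂
    have hwL := hconv₁ p₁ w a hp₁ ha w1
    have hw2 := w2; unfold Btwn at hw2
    rw [hδ] at hw2
    have hmw := hminS w hwL p₂ hp₂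
    have hp1w : G.dist p₁ w = 0 := by omega
    have : p₁ = w := (dist_eq_zero_iff hT).1 hp1w
    subst this
    exact w3
  have hbr₂ : ∀ b ∈ L₂, Btwn G b p₂ p₁ := by
    intro b hb
    obtain ⟨w, w1, w2, w3⟩ := median hT p₂ b p₁
    have hwL := hconv₂ p₂ w b hp₂ hb w1
    have hw2 := w2; unfold Btwn at hw2
    have hcomm : G.dist p₂ p₁ = G.dist p₁ p₂ := SimpleGraph.dist_comm
    rw [hcomm, hδ] at hw2
    have hmw := hminS p₁ hp₁ w hwL
    have hcomm2 : G.dist p₁ w = G.dist w p₁ := SimpleGraph.dist_comm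
    have hp2w : G.dist p₂ w = 0 := by omega
    have : p₂ = w := (dist_eq_zero_iff hT).1 hp2w
    subst this
    exact w3
  -- no common edge
  have hedge : ∀ y p, G.Adj y p → y ∈ L₁ → y ∈ L₂ → p ∈ L₁ → p ∈ L₂ → False := by
    intro y p hadj hy1 hy2 hq1 hq2
    exact hdisj ⟨y, p, hadj, hdisp₁ y hy1, hdisp₁ p hq1, hdisp₂ y hy2, hdisp₂ p hq2⟩
  -- the key disjointness fact
  have hkey : ∀ x, π₁ x ≠ p₁ → π₂ x ≠ p₂ → False := by
    intro x h1 h2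
    have B1 : Btwn G x (π₁ x) p₁ := hπ₁B x p₁ hp₁
    have B2 : Btwn G x (π₂ x) p₂ := hπ₂B x p₂ hp₂
    have Gl1 : Btwn G x p₁ p₂ := glue hT h1 B1 (hbr₁ (π₁ x) (hπ₁L x))
    have Gl2 : Btwn G x p₂ p₁ := glue hT h2 B2 (hbr₂ (π₂ x) (hπ₂L x))
    have e1 := Gl1; have e2 := Gl2
    unfold Btwn at e1 e2
    have hcomm : G.dist p₂ p₁ = G.dist p₁ p₂ := SimpleGraph.dist_comm
    have hcomm2 : G.dist x p₂ = G.dist p₂ x := SimpleGraph.dist_comm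
    have hcomm3 : G.dist x p₁ = G.dist p₁ x := SimpleGraph.dist_comm
    have hpp : G.dist p₁ p₂ = 0 := by omega
    have hppe : p₁ = p₂ := (dist_eq_zero_iff hT).1 hpp
    -- single point p := p₁ = p₂
    subst hppe
    -- both projections lie on [x, p₁]
    have hq1p : G.dist (π₁ x) p₁ ≠ 0 := fun h => h1 ((dist_eq_zero_iff hT).1 h)
    have hq2p : G.dist (π₂ x) p₁ ≠ 0 := fun h => h2 ((dist_eq_zero_iff hT).1 h)
    have hB1 := B1; have hB2 := B2
    unfold Btwn at hB1 hB2
    rcases le_total (G.dist x (π₁ x)) (G.dist x (π₂ x)) with hle | hle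
    · -- π₂ x lies between π₁ x and p₁, hence in L₁ as well
      obtain ⟨hd, hbtw1, hbtw2⟩ := segpos hT B1 B2 hle
      -- hbtw2 : Btwn (π₁ x) (π₂ x) p₁
      have hq2L1 : π₂ x ∈ L₁ := hconv₁ (π₁ x) (π₂ x) p₁ (hπ₁L x) hp₁ hbtw2
      -- point at distance 1 from p₁ on [π₂ x, p₁]
      have hint : G.dist (π₂ x) p₁ - 1 ≤ G.dist (π₂ x) p₁ := by omega
      obtain ⟨y, hy1, hy2, hy3⟩ := interp hT hint
      have hyp : G.dist y p₁ = 1 := by omega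
      have hadj : G.Adj y p₁ := (G.dist_eq_one_iff_adj).1 hyp
      have hyL1 : y ∈ L₁ := hconv₁ (π₂ x) y p₁ hq2L1 hp₁ hy3
      have hyL2 : y ∈ L₂ := hconv₂ (π₂ x) y p₁ (hπ₂L x) hp₂ hy3
      exact hedge y p₁ hadj hyL1 hyL2 hp₁ hp₂
    · obtain ⟨hd, hbtw1, hbtw2⟩ := segpos hT B2 B1 hle
      have hq1L2 : π₁ x ∈ L₂ := hconv₂ (π₂ x) (π₁ x) p₁ (hπ₂L x) hp₂ hbtw2
      have hint : G.dist (π₁ x) p₁ - 1 ≤ G.dist (π₁ x) p₁ := by omega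
      obtain ⟨y, hy1, hy2, hy3⟩ := interp hT hint
      have hyp : G.dist y p₁ = 1 := by omega
      have hadj : G.Adj y p₁ := (G.dist_eq_one_iff_adj).1 hyp
      have hyL1 : y ∈ L₁ := hconv₁ (π₁ x) y p₁ (hπ₁L x) hp₁ hy3
      have hyL2 : y ∈ L₂ := hconv₂ (π₁ x) y p₁ hq1L2 hp₂ hy3
      exact hedge y p₁ hadj hyL1 hyL2 hp₁ hp₂
  -- projections of axis points are themselves
  have hπ₁fix : ∀ q ∈ L₁, π₁ q = q := by
    intro q hq
    exact (gate_unique hT hq (hπ₁L q) (fun r hr => btw_left G q r) (hπ₁B q)).symm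
  have hπ₂fix : ∀ q ∈ L₂, π₂ q = q := by
    intro q hq
    exact (gate_unique hT hq (hπ₂L q) (fun r hr => btw_left G q r) (hπ₂B q)).symm
  -- inverse automorphisms
  have hg₁' : ∀ v w, G.Adj (g₁⁻¹ v) (g₁⁻¹ w) ↔ G.Adj v w := by
    intro v w
    conv_rhs => rw [show v = g₁ (g₁⁻¹ v) by simp, show w = g₁ (g₁⁻¹ w) by simp]
    exact (hg₁ _ _).symm
  have hg₂' : ∀ v w, G.Adj (g₂⁻¹ v) (g₂⁻¹ w) ↔ G.Adj v w := by
    intro v w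
    conv_rhs => rw [show v = g₂ (g₂⁻¹ v) by simp, show w = g₂ (g₂⁻¹ w) by simp]
    exact (hg₂ _ _).symm
  -- equivariance of the projections
  have hπ₁g : ∀ x, π₁ (g₁ x) = g₁ (π₁ x) := by
    intro x
    refine gate_unique hT (hπ₁L (g₁ x)) (hgL₁ (π₁ x) (hπ₁L x)) (hπ₁B (g₁ x)) ?_
    intro r hr
    have hr' : g₁⁻¹ r ∈ L₁ := hginvL₁ r hr
    have := auto_btw hT g₁ hg₁ (hπ₁B x (g₁⁻¹ r) hr')
    simpa using this
  have hπ₁ginv : ∀ x, π₁ (g₁⁻¹ x) = g₁⁻¹ (π₁ x) := by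
    intro x
    refine gate_unique hT (hπ₁L (g₁⁻¹ x)) (hginvL₁ (π₁ x) (hπ₁L x)) (hπ₁B (g₁⁻¹ x)) ?_
    intro r hr
    have hr' : g₁ r ∈ L₁ := hgL₁ r hr
    have := auto_btw hT g₁⁻¹ hg₁' (hπ₁B x (g₁ r) hr')
    simpa using this
  have hπ₂g : ∀ x, π₂ (g₂ x) = g₂ (π₂ x) := by
    intro x
    refine gate_unique hT (hπ₂L (g₂ x)) (hgL₂ (π₂ x) (hπ₂L x)) (hπ₂B (g₂ x)) ?_
    intro r hr
    have hr' : g₂⁻¹ r ∈ L₂ := hginvL₂ r hr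
    have := auto_btw hT g₂ hg₂ (hπ₂B x (g₂⁻¹ r) hr')
    simpa using this
  have hπ₂ginv : ∀ x, π₂ (g₂⁻¹ x) = g₂⁻¹ (π₂ x) := by
    intro x
    refine gate_unique hT (hπ₂L (g₂⁻¹ x)) (hginvL₂ (π₂ x) (hπ₂L x)) (hπ₂B (g₂⁻¹ x)) ?_
    intro r hr
    have hr' : g₂ r ∈ L₂ := hgL₂ r hr
    have := auto_btw hT g₂⁻¹ hg₂' (hπ₂B x (g₂ r) hr')
    simpa using this
  -- coordinate of inverse images
  have hcinv₁ : ∀ q ∈ L₁, c₁ (g₁⁻¹ q) = c₁ q - m₁ := by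
    intro q hq
    have h := hcsh₁ (g₁⁻¹ q) (hginvL₁ q hq)
    simp only [Equiv.Perm.inv_def, Equiv.apply_symm_apply] at h ⊢
    omega
  have hcinv₂ : ∀ q ∈ L₂, c₂ (g₂⁻¹ q) = c₂ q - m₂ := by
    intro q hq
    have h := hcsh₂ (g₂⁻¹ q) (hginvL₂ q hq)
    simp only [Equiv.Perm.inv_def, Equiv.apply_symm_apply] at h ⊢
    omega
  have hmz₁ : (1:ℤ) ≤ (m₁ : ℤ) := by exact_mod_cast hm₁1
  have hmz₂ : (1:ℤ) ≤ (m₂ : ℤ) := by exact_mod_cast hm₂1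
  -- injectivity of the coordinates on the axes
  have hne₁ : ∀ x, c₁ (π₁ x) ≠ c₁ p₁ → π₁ x ≠ p₁ := by
    intro x h he
    rw [he] at h
    exact h rfl
  have hne₂ : ∀ x, c₂ (π₂ x) ≠ c₂ p₂ → π₂ x ≠ p₂ := by
    intro x h he
    rw [he] at h
    exact h rfl
  -- ping-pong data
  set X : Bool → Set V := fun b =>
    if b then {x | c₁ p₁ < c₁ (π₁ x)} else {x | c₂ p₂ < c₂ (π₂ x)} with hXdef
  set Y : Bool → Set V := fun b =>
    if b then {x | c₁ (π₁ x) < c₁ p₁} else {x | c₂ (π₂ x) < c₂ p₂} with hYdef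
  have hXt : ∀ x, x ∈ X true ↔ c₁ p₁ < c₁ (π₁ x) := fun x => by simp [hXdef]
  have hXf : ∀ x, x ∈ X false ↔ c₂ p₂ < c₂ (π₂ x) := fun x => by simp [hXdef]
  have hYt : ∀ x, x ∈ Y true ↔ c₁ (π₁ x) < c₁ p₁ := fun x => by simp [hYdef]
  have hYf : ∀ x, x ∈ Y false ↔ c₂ (π₂ x) < c₂ p₂ := fun x => by simp [hYdef]
  have hcomp : (FreeGroup.lift (fun b : Bool => if b then g₁ else g₂) :
      FreeGroup Bool →* Equiv.Perm V) =
      (FreeGroup.lift (fun i : ULift Bool => if i.down then g₁ else g₂)).comp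
        (FreeGroup.freeGroupCongr Equiv.ulift.symm).toMonoidHom := by
    ext b
    simp
  rw [hcomp, MonoidHom.coe_comp]
  refine Function.Injective.comp ?_ (MulEquiv.injective _)
  haveI : Nontrivial (ULift Bool) :=
    ⟨⟨⟨true⟩, ⟨false⟩, fun h => by simpa using congrArg ULift.down h⟩⟩
  refine FreeGroup.injective_lift_of_ping_pong (fun i : ULift Bool => if i.down then g₁ else g₂)
    (fun i => X i.down) (fun i => Y i.down) ?_ ?_ ?_ ?_ ?_ ?_
  · -- nonempty
    intro i
    obtain ⟨i⟩ := i
    cases i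
    · refine ⟨g₂ p₂, (hXf _).2 ?_⟩
      rw [hπ₂g p₂, hπ₂fix p₂ hp₂, hcsh₂ p₂ hp₂]
      omega
    · refine ⟨g₁ p₁, (hXt _).2 ?_⟩
      rw [hπ₁g p₁, hπ₁fix p₁ hp₁, hcsh₁ p₁ hp₁]
      omega
  · -- X pairwise disjoint
    intro i j hij
    simp only [Function.onFun]
    rw [Set.disjoint_left]
    intro x hxi hxj
    obtain ⟨i⟩ := i
    obtain ⟨j⟩ := j
    cases i <;> cases j
    · exact hij rfl
    · exact hkey x (hne₁ x (by have := (hXt x).1 hxj; omega))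
        (hne₂ x (by have := (hXf x).1 hxi; omega))
    · exact hkey x (hne₁ x (by have := (hXt x).1 hxi; omega))
        (hne₂ x (by have := (hXf x).1 hxj; omega))
    · exact hij rfl
  · -- Y pairwise disjoint
    intro i j hij
    simp only [Function.onFun]
    rw [Set.disjoint_left]
    intro x hxi hxj
    obtain ⟨i⟩ := i
    obtain ⟨j⟩ := j
    cases i <;> cases j
    · exact hij rfl
    · exact hkey x (hne₁ x (by have := (hYt x).1 hxj; omega))
        (hne₂ x (by have := (hYf x).1 hxi; omega))
    · exact hkey x (hne₁ x (by have := (hYt x).1 hxi; omega))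
        (hne₂ x (by have := (hYf x).1 hxj; omega))
    · exact hij rfl
  · -- X and Y disjoint
    intro i j
    rw [Set.disjoint_left]
    intro x hxi hxj
    obtain ⟨i⟩ := i
    obtain ⟨j⟩ := j
    cases i <;> cases j
    · have h1 := (hXf x).1 hxi
      have h2 := (hYf x).1 hxj
      omega
    · exact hkey x (hne₁ x (by have := (hYt x).1 hxj; omega))
        (hne₂ x (by have := (hXf x).1 hxi; omega))
    · exact hkey x (hne₁ x (by have := (hXt x).1 hxi; omega))
        (hne₂ x (by have := (hYf x).1 hxj; omega))
    · have h1 := (hXt x).1 hxi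
      have h2 := (hYt x).1 hxj
      omega
  · -- a i maps (Y i)ᶜ into X i
    intro i
    obtain ⟨i⟩ := i
    cases i
    · intro z hz
      obtain ⟨x, hx, rfl⟩ := hz
      have hx' : ¬ (c₂ (π₂ x) < c₂ p₂) := fun h => hx ((hYf x).2 h)
      show g₂ x ∈ X false
      refine (hXf _).2 ?_
      rw [hπ₂g x, hcsh₂ (π₂ x) (hπ₂L x)]
      omega
    · intro z hz
      obtain ⟨x, hx, rfl⟩ := hz
      have hx' : ¬ (c₁ (π₁ x) < c₁ p₁) := fun h => hx ((hYt x).2 h)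
      show g₁ x ∈ X true
      refine (hXt _).2 ?_
      rw [hπ₁g x, hcsh₁ (π₁ x) (hπ₁L x)]
      omega
  · -- (a i)⁻¹ maps (X i)ᶜ into Y i
    intro i
    obtain ⟨i⟩ := i
    cases i
    · intro z hz
      obtain ⟨x, hx, rfl⟩ := hz
      have hx' : ¬ (c₂ p₂ < c₂ (π₂ x)) := fun h => hx ((hXf x).2 h)
      show g₂⁻¹ x ∈ Y false
      refine (hYf _).2 ?_
      rw [hπ₂ginv x, hcinv₂ (π₂ x) (hπ₂L x)]
      omega
    · intro z hz
      obtain ⟨x, hx, rfl⟩ := hz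
      have hx' : ¬ (c₁ p₁ < c₁ (π₁ x)) := fun h => hx ((hXt x).2 h)
      show g₁⁻¹ x ∈ Y true
      refine (hYt _).2 ?_
      rw [hπ₁ginv x, hcinv₁ (π₁ x) (hπ₁L x)]
      omega
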